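/- Let L be a self-adjoint continuous linear operator on the bipartite Hilbert space H = EuclideanSpace ℂ (Fin m × Fin n). Suppose the unit vectors a ∈ EuclideanSpace ℂ (Fin m) and b ∈ EuclideanSpace ℂ (Fin n) maximize ⟨a'⊗b', L (a'⊗b')⟩ over all pairs of unit vectors (a', b'), and set g = ⟨a⊗b, L (a⊗b)⟩ (a real number). Then the reduced operators satisfy the separability eigenvalue equations in their first form: L_a b = g • b and L_b a = g • a, where L_a : EuclideanSpace ℂ (Fin n) → EuclideanSpace ℂ (Fin n) is determined by ⟨x, L_a y⟩ = ⟨a⊗x, L (a⊗y)⟩ and L_b : EuclideanSpace ℂ (Fin m) → EuclideanSpace ℂ (Fin m) by ⟨x, L_b y⟩ = ⟨x⊗b, L (y⊗b)⟩. Moreover, g is the largest eigenvalue of both L_a and L_b. -/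

import Mathlib

open scoped ComplexInnerProductSpace

/-- The product vector `a ⊗ b` in the bipartite space, `(a ⊗ b)(i, k) = a i * b k`. -/
noncomputable def tp {m n : ℕ} (a : EuclideanSpace ℂ (Fin m)) (b : EuclideanSpace ℂ (Fin n)) :
    EuclideanSpace ℂ (Fin m × Fin n) :=
  WithLp.toLp 2 (fun p : Fin m × Fin n => a p.1 * b p.2)

/-- abstract key lemma -/
lemma key {k : ℕ} (K : EuclideanSpace ℂ (Fin k) →ₗ[ℂ] EuclideanSpace ℂ (Fin k))
    (hsymm : K.IsSymmetric) (g : ℝ) (v : EuclideanSpace ℂ (Fin k)) (hv : ‖v‖ = 1)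
    (hgv : (⟪v, K v⟫).re = g)
    (hbound : ∀ x : EuclideanSpace ℂ (Fin k), ‖x‖ = 1 → (⟪x, K x⟫).re ≤ g) :
    K v = (g : ℂ) • v ∧
      ∀ (μ : ℂ) (x : EuclideanSpace ℂ (Fin k)), x ≠ 0 → K x = μ • x → μ.re ≤ g := by
  -- eigenvalue bound
  have hbd : ∀ (μ : ℂ) (x : EuclideanSpace ℂ (Fin k)), x ≠ 0 → K x = μ • x → μ.re ≤ g := by
    intro μ x hx hKx
    set u : EuclideanSpace ℂ (Fin k) := ((‖x‖⁻¹ : ℝ) : ℂ) • x with hu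
    have hxn : (0:ℝ) < ‖x‖ := norm_pos_iff.mpr hx
    have hun : ‖u‖ = 1 := by
      rw [hu, norm_smul]
      simp [abs_of_nonneg (le_of_lt hxn), inv_mul_cancel₀ (ne_of_gt hxn)]
    have hinner : ⟪u, K u⟫ = μ := by
      rw [hu, map_smul, inner_smul_left, inner_smul_right, hKx, inner_smul_right,
        inner_self_eq_norm_sq_to_K (𝕜 := ℂ)]
      have : (starRingEnd ℂ) ((‖x‖⁻¹ : ℝ) : ℂ) = ((‖x‖⁻¹ : ℝ) : ℂ) := by
        simp [Complex.conj_ofReal]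
      rw [this]
      have hc : ((‖x‖ : ℝ) : ℂ) ≠ 0 := by exact_mod_cast ne_of_gt hxn
      push_cast
      field_simp
      exact mul_comm _ _
    have := hbound u hun
    rw [hinner] at this
    exact this
  refine ⟨?_, hbd⟩
  -- the eigenvector equation via Rayleigh
  set T : EuclideanSpace ℂ (Fin k) →L[ℂ] EuclideanSpace ℂ (Fin k) :=
    LinearMap.toContinuousLinearMap K with hT
  have hTsa : IsSelfAdjoint T := by
    rw [ContinuousLinearMap.isSelfAdjoint_iff_isSymmetric]
    exact hsymm
  have hv0 : v ≠ 0 := by intro h; rw [h] at hv; simp at hv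
  have hreTx : ∀ x : EuclideanSpace ℂ (Fin k), T.reApplyInnerSelf x = (⟪x, K x⟫).re := by
    intro x
    rw [ContinuousLinearMap.reApplyInnerSelf_apply]
    rw [← inner_conj_symm]
    simp only [RCLike.conj_re]
    rfl
  have hextr : IsMaxOn T.reApplyInnerSelf (Metric.sphere (0 : EuclideanSpace ℂ (Fin k)) ‖v‖) v := by
    intro x hx
    rw [Set.mem_setOf_eq, hreTx, hreTx, hgv]
    have hx1 : ‖x‖ = 1 := by
      rw [mem_sphere_zero_iff_norm] at hx
      rw [hx, hv]
    exact hbound x hx1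
  have heig := hTsa.eq_smul_self_of_isLocalExtrOn (Or.inr hextr.localize)
  have hrq : T.rayleighQuotient v = g := by
    rw [ContinuousLinearMap.rayleighQuotient, hreTx, hv, hgv]
    norm_num
  rw [hrq] at heig
  exact heig

/-- **First form of the separability eigenvalue equations.**  If the unit vectors `a, b`
maximize `⟨a'⊗b', L (a'⊗b')⟩` for a self-adjoint operator `L`, `g = ⟨a⊗b, L (a⊗b)⟩`, and
`L_a`, `L_b` are the reduced operators (determined by `⟨x, L_a y⟩ = ⟨a⊗x, L (a⊗y)⟩` and
`⟨x, L_b y⟩ = ⟨x⊗b, L (y⊗b)⟩`), then `L_a b = g • b`, `L_b a = g • a`, and `g` is the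
largest eigenvalue of both `L_a` and `L_b`. -/
theorem see_first_form {m n : ℕ} (hm : 1 ≤ m) (hn : 1 ≤ n)
    (L : EuclideanSpace ℂ (Fin m × Fin n) →L[ℂ] EuclideanSpace ℂ (Fin m × Fin n))
    (hLsa : IsSelfAdjoint L)
    (a : EuclideanSpace ℂ (Fin m)) (b : EuclideanSpace ℂ (Fin n))
    (ha : ‖a‖ = 1) (hb : ‖b‖ = 1)
    (hmax : ∀ (a' : EuclideanSpace ℂ (Fin m)) (b' : EuclideanSpace ℂ (Fin n)),
      ‖a'‖ = 1 → ‖b'‖ = 1 →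
      (⟪tp a' b', L (tp a' b')⟫).re ≤ (⟪tp a b, L (tp a b)⟫).re)
    (g : ℝ) (hg : g = (⟪tp a b, L (tp a b)⟫).re)
    (La : EuclideanSpace ℂ (Fin n) →ₗ[ℂ] EuclideanSpace ℂ (Fin n))
    (hLa : ∀ x y : EuclideanSpace ℂ (Fin n), ⟪x, La y⟫ = ⟪tp a x, L (tp a y)⟫)
    (Lb : EuclideanSpace ℂ (Fin m) →ₗ[ℂ] EuclideanSpace ℂ (Fin m))
    (hLb : ∀ x y : EuclideanSpace ℂ (Fin m), ⟪x, Lb y⟫ = ⟪tp x b, L (tp y b)⟫) :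
    La b = (g : ℂ) • b ∧ Lb a = (g : ℂ) • a ∧
    (∀ (μ : ℂ) (x : EuclideanSpace ℂ (Fin n)), x ≠ 0 → La x = μ • x → μ.re ≤ g) ∧
    (∀ (μ : ℂ) (x : EuclideanSpace ℂ (Fin m)), x ≠ 0 → Lb x = μ • x → μ.re ≤ g) := by
  have hLsymm : (L : EuclideanSpace ℂ (Fin m × Fin n) →ₗ[ℂ] _).IsSymmetric :=
    ContinuousLinearMap.isSelfAdjoint_iff_isSymmetric.mp hLsa
  have hLasymm : La.IsSymmetric := by
    intro x y
    have h1 : ⟪La x, y⟫ = starRingEnd ℂ ⟪y, La x⟫ := (inner_conj_symm _ _).symm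
    rw [h1, hLa, hLa, inner_conj_symm]
    exact hLsymm (tp a x) (tp a y)
  have hLbsymm : Lb.IsSymmetric := by
    intro x y
    have h1 : ⟪Lb x, y⟫ = starRingEnd ℂ ⟪y, Lb x⟫ := (inner_conj_symm _ _).symm
    rw [h1, hLb, hLb, inner_conj_symm]
    exact hLsymm (tp x b) (tp y b)
  have hga : (⟪b, La b⟫).re = g := by rw [hLa, hg]
  have hgb : (⟪a, Lb a⟫).re = g := by rw [hLb, hg]
  have hba : ∀ x : EuclideanSpace ℂ (Fin n), ‖x‖ = 1 → (⟪x, La x⟫).re ≤ g := by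
    intro x hx
    rw [hLa, hg]
    exact hmax a x ha hx
  have hbb : ∀ x : EuclideanSpace ℂ (Fin m), ‖x‖ = 1 → (⟪x, Lb x⟫).re ≤ g := by
    intro x hx
    rw [hLb, hg]
    exact hmax x b hx hb
  obtain ⟨h1, h3⟩ := key La hLasymm g b hb hga hba
  obtain ⟨h2, h4⟩ := key Lb hLbsymm g a ha hgb hbb
  exact ⟨h1, h2, h3, h4⟩
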